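/- Let β = 2 + (W_x - W_x^{-1})² + (W_y - W_y^{-1})² + ιωΔ²/D where |W_x| = |W_y| = 1, ω ≠ 0 real, Δ, D > 0. Then the quadratic W_z² - β W_z + 1 = 0 has no root on the unit circle, and hence has exactly one root W_{z∗} with |W_{z∗}| < 1. -/

import Mathlib

/-- With β = 2 + (W_x − W_x⁻¹)² + (W_y − W_y⁻¹)² + ιωΔ²/D, |W_x| = |W_y| = 1,
ω ≠ 0, Δ, D > 0, the quadratic W_z² − β W_z + 1 = 0 has no root on the unit
circle and hence exactly one root of modulus strictly less than 1. -/
theorem stmt14 (Wx Wy : ℂ) (hWx : ‖Wx‖ = 1) (hWy : ‖Wy‖ = 1)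
    (ω Δ D : ℝ) (hω : ω ≠ 0) (hΔ : 0 < Δ) (hD : 0 < D) :
    (∀ z : ℂ,
      z ^ 2 - (2 + (Wx - Wx⁻¹) ^ 2 + (Wy - Wy⁻¹) ^ 2
        + Complex.I * (ω : ℂ) * (Δ : ℂ) ^ 2 / (D : ℂ)) * z + 1 = 0 →
      ‖z‖ ≠ 1) ∧
    ∃! z : ℂ,
      z ^ 2 - (2 + (Wx - Wx⁻¹) ^ 2 + (Wy - Wy⁻¹) ^ 2
        + Complex.I * (ω : ℂ) * (Δ : ℂ) ^ 2 / (D : ℂ)) * z + 1 = 0 ∧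
      ‖z‖ < 1 := by
  set β : ℂ := 2 + (Wx - Wx⁻¹) ^ 2 + (Wy - Wy⁻¹) ^ 2
      + Complex.I * (ω : ℂ) * (Δ : ℂ) ^ 2 / (D : ℂ) with hβdef
  -- imaginary part of β is nonzero
  have him : ∀ w : ℂ, ‖w‖ = 1 → ((w - w⁻¹) ^ 2).im = 0 := by
    intro w hw
    rw [Complex.inv_def, Complex.normSq_eq_norm_sq, hw]
    simp [sq, Complex.mul_im, Complex.sub_im, Complex.sub_re]
  have hβim : β.im = ω * Δ ^ 2 / D := by
    rw [hβdef]
    simp [Complex.add_im, him Wx hWx, him Wy hWy, Complex.div_im, Complex.mul_im,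
      Complex.mul_re, Complex.normSq_apply, ← Complex.ofReal_pow]
    field_simp
  have hβim0 : β.im ≠ 0 := by
    rw [hβim]
    positivity
  -- Part 1: no root on the unit circle
  have part1 : ∀ z : ℂ, z ^ 2 - β * z + 1 = 0 → ‖z‖ ≠ 1 := by
    intro z hz hz1
    have hz0 : z ≠ 0 := by
      intro h; rw [h] at hz1; simp at hz1
    have hβz : β = z + z⁻¹ := by
      field_simp
      linear_combination -hz
    have hinv : z⁻¹ = (starRingEnd ℂ) z := Complex.inv_eq_conj hz1
    have : β.im = 0 := by
      rw [hβz, hinv]; simp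
    exact hβim0 this
  -- roots
  obtain ⟨d, hd⟩ := IsAlgClosed.exists_pow_nat_eq (β ^ 2 - 4) (by norm_num : 0 < 2)
  set r : ℂ := (β + d) / 2 with hr
  set s : ℂ := (β - d) / 2 with hs
  have hfac : ∀ z : ℂ, z ^ 2 - β * z + 1 = (z - r) * (z - s) := by
    intro z
    rw [hr, hs]
    linear_combination (1/4 : ℂ) * hd
  have hrroot : r ^ 2 - β * r + 1 = 0 := by rw [hfac]; ring
  have hsroot : s ^ 2 - β * s + 1 = 0 := by rw [hfac]; ring
  have hprod : ‖r‖ * ‖s‖ = 1 := by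
    rw [← norm_mul]
    have : r * s = 1 := by rw [hr, hs]; linear_combination (-1/4 : ℂ) * hd
    rw [this]; simp
  have hr1 : ‖r‖ ≠ 1 := part1 r hrroot
  have hs1 : ‖s‖ ≠ 1 := part1 s hsroot
  refine ⟨part1, ?_⟩
  have key : ∀ z : ℂ, z ^ 2 - β * z + 1 = 0 ↔ z = r ∨ z = s := by
    intro z
    rw [hfac, mul_eq_zero, sub_eq_zero, sub_eq_zero]
  rcases lt_or_gt_of_ne hr1 with h | h
  · refine ⟨r, ⟨hrroot, h⟩, ?_⟩
    rintro z ⟨hz, hzlt⟩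
    rcases (key z).mp hz with rfl | rfl
    · rfl
    · exfalso
      nlinarith [hprod, norm_nonneg s, h, hzlt]
  · have hslt : ‖s‖ < 1 := by
      by_contra hge
      push_neg at hge
      nlinarith [hprod, norm_nonneg r, h, hge]
    refine ⟨s, ⟨hsroot, hslt⟩, ?_⟩
    rintro z ⟨hz, hzlt⟩
    rcases (key z).mp hz with rfl | rfl
    · exfalso; exact lt_irrefl _ (h.trans hzlt)
    · rfl
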